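/- Let n ≥ 2 and μ₀ the uniform probability measure on S^{n-1}. There exist constants C₂ > 0 and C₃ > 0, depending only on n, such that for every y ∈ S^{n-1} and every coordinate index 1 ≤ i ≤ n: ∫_{S^{n-1}} e^{⟪x, y⟫} x_i² dμ₀(x) = C₂ y_i² + C₃. -/

import Mathlib

open MeasureTheory RealInnerProductSpace ENNReal

/-- The uniform (normalized surface) probability measure on the unit sphere of `ℝ^n`,
viewed as a measure on the ambient space. -/
noncomputable def uniformSphere (n : ℕ) : Measure (EuclideanSpace ℝ (Fin n)) :=
  (((volume : Measure (EuclideanSpace ℝ (Fin n))).toSphere) Set.univ)⁻¹ •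
    Measure.map Subtype.val ((volume : Measure (EuclideanSpace ℝ (Fin n))).toSphere)

open scoped Pointwise

namespace SphereAux

variable {n : ℕ}

local notation "E" => EuclideanSpace ℝ (Fin n)

lemma smul_preimage (T : E ≃ₗᵢ[ℝ] E) (A : Set (EuclideanSpace ℝ (Fin n))) :
    Set.Ioo (0:ℝ) 1 • (⇑T ⁻¹' A) = ⇑T ⁻¹' (Set.Ioo (0:ℝ) 1 • A) := by
  ext x
  simp only [Set.mem_smul, Set.mem_preimage]
  constructor
  · rintro ⟨r, hr, z, hz, rfl⟩
    exact ⟨r, hr, T z, hz, (_root_.map_smul T r z).symm⟩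
  · rintro ⟨r, hr, z, hz, hrz⟩
    refine ⟨r, hr, T.symm z, by simpa using hz, ?_⟩
    apply T.injective
    rw [_root_.map_smul]
    simpa using hrz

lemma sphere_preimage (T : E ≃ₗᵢ[ℝ] E) :
    ⇑T ⁻¹' (Metric.sphere (0:EuclideanSpace ℝ (Fin n)) 1) = Metric.sphere 0 1 := by
  ext x
  simp [mem_sphere_zero_iff_norm]

lemma map_comp_val (T : E ≃ₗᵢ[ℝ] E) :
    Measure.map (⇑T ∘ Subtype.val)
      ((volume : Measure (EuclideanSpace ℝ (Fin n))).toSphere) =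
    Measure.map Subtype.val ((volume : Measure (EuclideanSpace ℝ (Fin n))).toSphere) := by
  ext s hs
  rw [Measure.map_apply (T.continuous.measurable.comp measurable_subtype_coe) hs,
    Measure.map_apply measurable_subtype_coe hs, Set.preimage_comp,
    Measure.toSphere_apply' _ (measurable_subtype_coe (T.continuous.measurable hs)),
    Measure.toSphere_apply' _ (measurable_subtype_coe hs),
    Subtype.image_preimage_coe, Subtype.image_preimage_coe]
  have h1 : Metric.sphere (0:EuclideanSpace ℝ (Fin n)) 1 ∩ (⇑T ⁻¹' s)
      = ⇑T ⁻¹' (Metric.sphere 0 1 ∩ s) := by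
    rw [Set.preimage_inter, sphere_preimage]
  rw [h1, smul_preimage]
  congr 1
  have hTvol := T.measurePreserving.map_eq
  calc volume (⇑T ⁻¹' (Set.Ioo (0:ℝ) 1 • (Metric.sphere 0 1 ∩ s)))
      = Measure.map (⇑T.toHomeomorph.toMeasurableEquiv) volume
          (Set.Ioo (0:ℝ) 1 • (Metric.sphere 0 1 ∩ s)) := by
        rw [MeasurableEquiv.map_apply]; rfl
    _ = volume (Set.Ioo (0:ℝ) 1 • (Metric.sphere 0 1 ∩ s)) := by
        rw [show (⇑T.toHomeomorph.toMeasurableEquiv : EuclideanSpace ℝ (Fin n) → _) = ⇑T from rfl,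
          hTvol]

lemma map_uniformSphere (T : E ≃ₗᵢ[ℝ] E) :
    Measure.map (⇑T) (uniformSphere n) = uniformSphere n := by
  rw [uniformSphere, Measure.map_smul,
    Measure.map_map T.continuous.measurable measurable_subtype_coe, map_comp_val]

lemma measurePreserving_uniformSphere (T : E ≃ₗᵢ[ℝ] E) :
    MeasurePreserving (⇑T) (uniformSphere n) (uniformSphere n) :=
  ⟨T.continuous.measurable, map_uniformSphere T⟩

lemma integral_comp_LI (T : E ≃ₗᵢ[ℝ] E) (f : EuclideanSpace ℝ (Fin n) → ℝ) :
    ∫ x, f (T x) ∂(uniformSphere n) = ∫ x, f x ∂(uniformSphere n) :=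
  (measurePreserving_uniformSphere T).integral_comp T.toHomeomorph.measurableEmbedding f


lemma nontrivialE (hn : 2 ≤ n) : Nontrivial (EuclideanSpace ℝ (Fin n)) := by
  refine ⟨⟨EuclideanSpace.single ⟨0, by omega⟩ 1, 0, fun h => ?_⟩⟩
  have h2 := congrArg norm h
  rw [EuclideanSpace.norm_single, norm_zero, norm_one] at h2
  exact one_ne_zero h2

lemma toSphere_univ_ne_zero (hn : 2 ≤ n) :
    ((volume : Measure (EuclideanSpace ℝ (Fin n))).toSphere) Set.univ ≠ 0 := by
  haveI := nontrivialE hn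
  rw [Measure.toSphere_apply_univ]
  refine mul_ne_zero (by simp [finrank_euclideanSpace]; omega) ?_
  simpa using (Metric.measure_ball_pos (volume : Measure (EuclideanSpace ℝ (Fin n))) 0 (by norm_num : (0:ℝ) < 1)).ne'

lemma toSphere_univ_ne_top :
    ((volume : Measure (EuclideanSpace ℝ (Fin n))).toSphere) Set.univ ≠ ⊤ :=
  (measure_lt_top _ _).ne

lemma integrable_uniformSphere (hn : 2 ≤ n) {f : EuclideanSpace ℝ (Fin n) → ℝ}
    (hf : Continuous f) : Integrable f (uniformSphere n) := by
  rw [uniformSphere]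
  rw [integrable_smul_measure (ENNReal.inv_ne_zero.2 toSphere_univ_ne_top)
      (ENNReal.inv_ne_top.2 (toSphere_univ_ne_zero hn)),
    (MeasurableEmbedding.subtype_coe Metric.isClosed_sphere.measurableSet).integrable_map_iff]
  refine (hf.comp continuous_subtype_val).integrable_of_hasCompactSupport ?_
  exact IsCompact.of_isClosed_subset isCompact_univ isClosed_closure (Set.subset_univ _)

lemma integral_uniformSphere_pos (hn : 2 ≤ n) {f : EuclideanSpace ℝ (Fin n) → ℝ}
    (hf : Continuous f) (h0 : ∀ x, 0 ≤ f x)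
    {U : Set (EuclideanSpace ℝ (Fin n))} (hU : IsOpen U) (hne : U.Nonempty)
    (hsub : ∀ x ∈ U, ∃ r ∈ Set.Ioo (0:ℝ) 1,
      ∃ z : EuclideanSpace ℝ (Fin n), ‖z‖ = 1 ∧ f z ≠ 0 ∧ r • z = x) :
    0 < ∫ x, f x ∂(uniformSphere n) := by
  rw [integral_pos_iff_support_of_nonneg_ae (Filter.Eventually.of_forall h0)
    (integrable_uniformSphere hn hf)]
  have hms : MeasurableSet (Function.support f) := hf.isOpen_support.measurableSet
  rw [uniformSphere, Measure.smul_apply, Measure.map_apply measurable_subtype_coe hms,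
    smul_eq_mul]
  have key : (volume : Measure (EuclideanSpace ℝ (Fin n))).toSphere
      (Subtype.val ⁻¹' Function.support f) ≠ 0 := by
    rw [Measure.toSphere_apply' _ (measurable_subtype_coe hms), Subtype.image_preimage_coe]
    refine mul_ne_zero (by simp [finrank_euclideanSpace]; omega) ?_
    have hUsub : U ⊆ Set.Ioo (0:ℝ) 1 • (Metric.sphere (0:EuclideanSpace ℝ (Fin n)) 1
        ∩ Function.support f) := by
      intro x hx
      obtain ⟨r, hr, z, hz1, hz2, hrz⟩ := hsub x hx
      exact Set.mem_smul.2 ⟨r, hr, z, ⟨mem_sphere_zero_iff_norm.2 hz1, hz2⟩, hrz⟩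
    have := (hU.measure_pos volume hne).trans_le (measure_mono hUsub)
    exact this.ne'
  exact ENNReal.mul_pos (ENNReal.inv_ne_zero.2 toSphere_univ_ne_top) key

lemma isProbability_uniformSphere (hn : 2 ≤ n) :
    IsProbabilityMeasure (uniformSphere n) := by
  constructor
  rw [uniformSphere, Measure.smul_apply, Measure.map_apply measurable_subtype_coe .univ,
    Set.preimage_univ, smul_eq_mul,
    ENNReal.inv_mul_cancel (toSphere_univ_ne_zero hn) toSphere_univ_ne_top]


/-- Signed involutive coordinate permutation as a linear isometry equivalence. -/
noncomputable def spLI (π : Equiv.Perm (Fin n)) (ε : Fin n → ℝ) (hπ : ∀ k, π (π k) = k)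
    (hε : ∀ k, ε k * ε k = 1) (hεπ : ∀ k, ε (π k) = ε k) :
    EuclideanSpace ℝ (Fin n) ≃ₗᵢ[ℝ] EuclideanSpace ℝ (Fin n) := by
  refine LinearIsometryEquiv.mk (LinearEquiv.ofInvolutive
    { toFun := fun x => (WithLp.equiv 2 (Fin n → ℝ)).symm (fun k => ε k * x (π k))
      map_add' := fun x y => by
        apply (WithLp.equiv 2 (Fin n → ℝ)).injective
        funext k
        show ε k * (x (π k) + y (π k)) = ε k * x (π k) + ε k * y (π k)
        ring
      map_smul' := fun c x => by
        apply (WithLp.equiv 2 (Fin n → ℝ)).injective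
        funext k
        show ε k * (c * x (π k)) = c * (ε k * x (π k))
        ring } ?_) ?_
  · intro x
    show (WithLp.equiv 2 (Fin n → ℝ)).symm _ = x
    apply (WithLp.equiv 2 (Fin n → ℝ)).injective
    funext k
    show ε k * (ε (π k) * x (π (π k))) = x k
    rw [hεπ, hπ, ← mul_assoc, hε, one_mul]
  · intro x
    show ‖(WithLp.equiv 2 (Fin n → ℝ)).symm (fun k => ε k * x (π k))‖ = ‖x‖
    rw [EuclideanSpace.norm_eq, EuclideanSpace.norm_eq]
    congr 1
    calc ∑ k, ‖((WithLp.equiv 2 (Fin n → ℝ)).symm (fun k => ε k * x (π k)) : _) k‖ ^ 2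
        = ∑ k, ‖x (π k)‖ ^ 2 := by
          refine Finset.sum_congr rfl fun k _ => ?_
          show ‖ε k * x (π k)‖ ^ 2 = _
          rw [norm_mul, mul_pow]
          have : ‖ε k‖ ^ 2 = 1 := by
            rw [Real.norm_eq_abs, sq_abs, ← hε k, sq]
          rw [this, one_mul]
      _ = ∑ k, ‖x k‖ ^ 2 := Equiv.sum_comp π (fun j => ‖x j‖ ^ 2)

lemma spLI_apply (π : Equiv.Perm (Fin n)) (ε : Fin n → ℝ) (hπ : ∀ k, π (π k) = k)
    (hε : ∀ k, ε k * ε k = 1) (hεπ : ∀ k, ε (π k) = ε k)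
    (x : EuclideanSpace ℝ (Fin n)) (k : Fin n) :
    spLI π ε hπ hε hεπ x k = ε k * x (π k) := rfl


section TwoCoords

variable (hn : 2 ≤ n) {a b : Fin n} (hab : a ≠ b)

/-- Negation of coordinate `a`. -/
noncomputable def negLI (a : Fin n) : EuclideanSpace ℝ (Fin n) ≃ₗᵢ[ℝ] EuclideanSpace ℝ (Fin n) :=
  spLI 1 (fun k => if k = a then (-1:ℝ) else 1) (fun _ => rfl)
    (fun k => by by_cases h : k = a <;> simp [h]) (fun _ => rfl)

lemma negLI_apply_self (a : Fin n) (x : EuclideanSpace ℝ (Fin n)) :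
    negLI a x a = - x a := by
  show (if a = a then (-1:ℝ) else 1) * x ((1 : Equiv.Perm (Fin n)) a) = - x a
  simp

lemma negLI_apply_ne {a c : Fin n} (h : c ≠ a) (x : EuclideanSpace ℝ (Fin n)) :
    negLI a x c = x c := by
  show (if c = a then (-1:ℝ) else 1) * x ((1 : Equiv.Perm (Fin n)) c) = x c
  simp [h]

/-- Swap of coordinates `a`, `b`. -/
noncomputable def swapLI (a b : Fin n) :
    EuclideanSpace ℝ (Fin n) ≃ₗᵢ[ℝ] EuclideanSpace ℝ (Fin n) :=
  spLI (Equiv.swap a b) (fun _ => 1) (fun k => Equiv.swap_apply_self a b k)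
    (fun _ => one_mul 1) (fun _ => rfl)

lemma swapLI_apply (a b : Fin n) (x : EuclideanSpace ℝ (Fin n)) (k : Fin n) :
    swapLI a b x k = x (Equiv.swap a b k) := by
  show (1:ℝ) * x (Equiv.swap a b k) = x (Equiv.swap a b k)
  rw [one_mul]

lemma cont_coord (a : Fin n) : Continuous fun x : EuclideanSpace ℝ (Fin n) => x a :=
  (EuclideanSpace.proj a).continuous

set_option linter.unusedSectionVars false

lemma cosh_sub_nonneg (u v : ℝ) : 0 ≤ (Real.cosh u - Real.cosh v) * (u^2 - v^2) := by
  rcases le_total (u^2) (v^2) with h | h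
  · have habs : |u| ≤ |v| := by
      have := Real.sqrt_le_sqrt h
      rwa [Real.sqrt_sq_eq_abs, Real.sqrt_sq_eq_abs] at this
    have hc : Real.cosh u ≤ Real.cosh v := Real.cosh_le_cosh.2 habs
    nlinarith
  · have habs : |v| ≤ |u| := by
      have := Real.sqrt_le_sqrt h
      rwa [Real.sqrt_sq_eq_abs, Real.sqrt_sq_eq_abs] at this
    exact mul_nonneg (by linarith [Real.cosh_le_cosh.2 habs]) (by linarith)

lemma cosh_ne_of_sq_ne {u v : ℝ} (h : u^2 ≠ v^2) : Real.cosh u ≠ Real.cosh v := by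
  intro hc
  apply h
  have h1 : |u| ≤ |v| := Real.cosh_le_cosh.1 hc.le
  have h2 : |v| ≤ |u| := Real.cosh_le_cosh.1 hc.ge
  rw [← sq_abs u, ← sq_abs v, le_antisymm h1 h2]

include hn hab

lemma C_zero :
    ∫ x, Real.exp (x a) * (x a * x b) ∂(uniformSphere n) = 0 := by
  have h := integral_comp_LI (negLI b) (fun x => Real.exp (x a) * (x a * x b))
  have hpt : ∀ x : EuclideanSpace ℝ (Fin n),
      Real.exp ((negLI b x) a) * ((negLI b x) a * (negLI b x) b)
        = - (Real.exp (x a) * (x a * x b)) := by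
    intro x
    rw [negLI_apply_ne hab, negLI_apply_self]
    ring
  rw [MeasureTheory.integral_congr_ae (Filter.Eventually.of_forall hpt), integral_neg] at h
  linarith

lemma exp_eq_cosh :
    ∫ x, Real.exp (x a) * ((x a)^2 - (x b)^2) ∂(uniformSphere n)
      = ∫ x, Real.cosh (x a) * ((x a)^2 - (x b)^2) ∂(uniformSphere n) := by
  have h := integral_comp_LI (negLI a) (fun x => Real.exp (x a) * ((x a)^2 - (x b)^2))
  have hpt : ∀ x : EuclideanSpace ℝ (Fin n),
      Real.exp ((negLI a x) a) * (((negLI a x) a)^2 - ((negLI a x) b)^2)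
        = Real.exp (-(x a)) * ((x a)^2 - (x b)^2) := by
    intro x
    rw [negLI_apply_ne (Ne.symm hab), negLI_apply_self]
    ring_nf
  rw [MeasureTheory.integral_congr_ae (Filter.Eventually.of_forall hpt)] at h
  have hint1 : Integrable (fun x : EuclideanSpace ℝ (Fin n) =>
      Real.exp (x a) * ((x a)^2 - (x b)^2)) (uniformSphere n) :=
    integrable_uniformSphere hn ((Real.continuous_exp.comp (cont_coord a)).mul
      (((cont_coord a).pow 2).sub ((cont_coord b).pow 2)))
  have hint2 : Integrable (fun x : EuclideanSpace ℝ (Fin n) =>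
      Real.exp (-(x a)) * ((x a)^2 - (x b)^2)) (uniformSphere n) :=
    integrable_uniformSphere hn ((Real.continuous_exp.comp (cont_coord a).neg).mul
      (((cont_coord a).pow 2).sub ((cont_coord b).pow 2)))
  have : ∀ x : EuclideanSpace ℝ (Fin n),
      Real.cosh (x a) * ((x a)^2 - (x b)^2)
        = (Real.exp (x a) * ((x a)^2 - (x b)^2) + Real.exp (-(x a)) * ((x a)^2 - (x b)^2)) / 2 := by
    intro x; rw [Real.cosh_eq]; ring
  rw [MeasureTheory.integral_congr_ae (Filter.Eventually.of_forall this), integral_div,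
    integral_add hint1 hint2, ← h]
  ring

lemma cosh_swap :
    ∫ x, Real.cosh (x a) * ((x a)^2 - (x b)^2) ∂(uniformSphere n)
      = - ∫ x, Real.cosh (x b) * ((x a)^2 - (x b)^2) ∂(uniformSphere n) := by
  have h := integral_comp_LI (swapLI a b) (fun x => Real.cosh (x a) * ((x a)^2 - (x b)^2))
  have hpt : ∀ x : EuclideanSpace ℝ (Fin n),
      Real.cosh ((swapLI a b x) a) * (((swapLI a b x) a)^2 - ((swapLI a b x) b)^2)
        = - (Real.cosh (x b) * ((x a)^2 - (x b)^2)) := by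
    intro x
    rw [swapLI_apply, swapLI_apply, Equiv.swap_apply_left, Equiv.swap_apply_right]
    ring
  rw [MeasureTheory.integral_congr_ae (Filter.Eventually.of_forall hpt), integral_neg] at h
  linarith

lemma P_pos :
    0 < ∫ x, (Real.cosh (x a) - Real.cosh (x b)) * ((x a)^2 - (x b)^2) ∂(uniformSphere n) := by
  refine integral_uniformSphere_pos hn
    (((Real.continuous_cosh.comp (cont_coord a)).sub
        (Real.continuous_cosh.comp (cont_coord b))).mul
      (((cont_coord a).pow 2).sub ((cont_coord b).pow 2)))
    (fun x => cosh_sub_nonneg _ _)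
    (U := Metric.ball 0 1 ∩ {x : EuclideanSpace ℝ (Fin n) | (x a)^2 ≠ (x b)^2})
    (Metric.isOpen_ball.inter ?_) ?_ ?_
  · have : {x : EuclideanSpace ℝ (Fin n) | (x a)^2 ≠ (x b)^2}
        = (fun x : EuclideanSpace ℝ (Fin n) => (x a)^2 - (x b)^2) ⁻¹' {(0:ℝ)}ᶜ := by
      ext x; simp [sub_eq_zero]
    rw [this]
    exact (((cont_coord a).pow 2).sub ((cont_coord b).pow 2)).isOpen_preimage _
      isOpen_compl_singleton
  · refine ⟨(1/2 : ℝ) • EuclideanSpace.single a 1, ?_, ?_⟩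
    · rw [Metric.mem_ball, dist_zero_right, norm_smul, EuclideanSpace.norm_single]
      norm_num
    · have ha : ((1/2 : ℝ) • EuclideanSpace.single a (1:ℝ)) a = 1/2 := by
        simp [EuclideanSpace.single_apply]
      have hb : ((1/2 : ℝ) • EuclideanSpace.single a (1:ℝ)) b = 0 := by
        simp [EuclideanSpace.single_apply, Ne.symm hab]
      simp only [Set.mem_setOf_eq, ha, hb]
      norm_num
  · rintro x ⟨hx1, hx2⟩
    have hx0 : x ≠ 0 := by
      rintro rfl
      exact hx2 rfl
    have hnx : 0 < ‖x‖ := norm_pos_iff.2 hx0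
    refine ⟨‖x‖, ⟨hnx, by rwa [Metric.mem_ball, dist_zero_right] at hx1⟩,
      ‖x‖⁻¹ • x, norm_smul_inv_norm hx0, ?_, smul_inv_smul₀ hnx.ne' x⟩
    have hca : (‖x‖⁻¹ • x) a = ‖x‖⁻¹ * x a := rfl
    have hcb : (‖x‖⁻¹ • x) b = ‖x‖⁻¹ * x b := rfl
    refine mul_ne_zero (sub_ne_zero.2 (cosh_ne_of_sq_ne ?_)) (sub_ne_zero.2 ?_) <;>
      · rw [hca, hcb, mul_pow, mul_pow]
        intro h
        exact hx2 (mul_left_cancel₀ (pow_ne_zero 2 (inv_ne_zero hnx.ne')) h)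

lemma AB_pos :
    0 < (∫ x, Real.exp (x a) * (x a)^2 ∂(uniformSphere n))
        - ∫ x, Real.exp (x a) * (x b)^2 ∂(uniformSphere n) := by
  have hint1 : Integrable (fun x : EuclideanSpace ℝ (Fin n) =>
      Real.exp (x a) * (x a)^2) (uniformSphere n) :=
    integrable_uniformSphere hn ((Real.continuous_exp.comp (cont_coord a)).mul
      ((cont_coord a).pow 2))
  have hint2 : Integrable (fun x : EuclideanSpace ℝ (Fin n) =>
      Real.exp (x a) * (x b)^2) (uniformSphere n) :=
    integrable_uniformSphere hn ((Real.continuous_exp.comp (cont_coord a)).mul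
      ((cont_coord b).pow 2))
  have hint3 : Integrable (fun x : EuclideanSpace ℝ (Fin n) =>
      Real.cosh (x a) * ((x a)^2 - (x b)^2)) (uniformSphere n) :=
    integrable_uniformSphere hn ((Real.continuous_cosh.comp (cont_coord a)).mul
      (((cont_coord a).pow 2).sub ((cont_coord b).pow 2)))
  have hint4 : Integrable (fun x : EuclideanSpace ℝ (Fin n) =>
      Real.cosh (x b) * ((x a)^2 - (x b)^2)) (uniformSphere n) :=
    integrable_uniformSphere hn ((Real.continuous_cosh.comp (cont_coord b)).mul
      (((cont_coord a).pow 2).sub ((cont_coord b).pow 2)))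
  have h1 : (∫ x, Real.exp (x a) * (x a)^2 ∂(uniformSphere n))
        - ∫ x, Real.exp (x a) * (x b)^2 ∂(uniformSphere n)
      = ∫ x, Real.exp (x a) * ((x a)^2 - (x b)^2) ∂(uniformSphere n) := by
    rw [← integral_sub hint1 hint2]
    exact MeasureTheory.integral_congr_ae (Filter.Eventually.of_forall fun x => by ring)
  have hP : ∫ x, (Real.cosh (x a) - Real.cosh (x b)) * ((x a)^2 - (x b)^2) ∂(uniformSphere n)
      = (∫ x, Real.cosh (x a) * ((x a)^2 - (x b)^2) ∂(uniformSphere n))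
        - ∫ x, Real.cosh (x b) * ((x a)^2 - (x b)^2) ∂(uniformSphere n) := by
    rw [← integral_sub hint3 hint4]
    exact MeasureTheory.integral_congr_ae (Filter.Eventually.of_forall fun x => by ring)
  have h2 := exp_eq_cosh hn hab
  have h3 := cosh_swap hn hab
  have h4 := P_pos hn hab
  rw [hP] at h4
  rw [h1, h2]
  linarith

lemma B_pos :
    0 < ∫ x, Real.exp (x a) * (x b)^2 ∂(uniformSphere n) := by
  refine integral_uniformSphere_pos hn
    ((Real.continuous_exp.comp (cont_coord a)).mul ((cont_coord b).pow 2))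
    (fun x => mul_nonneg (Real.exp_pos _).le (sq_nonneg _))
    (U := Metric.ball 0 1 ∩ {x : EuclideanSpace ℝ (Fin n) | x b ≠ 0})
    (Metric.isOpen_ball.inter ?_) ?_ ?_
  · have : {x : EuclideanSpace ℝ (Fin n) | x b ≠ 0}
        = (fun x : EuclideanSpace ℝ (Fin n) => x b) ⁻¹' {(0:ℝ)}ᶜ := rfl
    rw [this]
    exact (cont_coord b).isOpen_preimage _ isOpen_compl_singleton
  · refine ⟨(1/2 : ℝ) • EuclideanSpace.single b 1, ?_, ?_⟩
    · rw [Metric.mem_ball, dist_zero_right, norm_smul, EuclideanSpace.norm_single]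
      norm_num
    · have hb : ((1/2 : ℝ) • EuclideanSpace.single b (1:ℝ)) b = 1/2 := by
        simp [EuclideanSpace.single_apply]
      simp only [Set.mem_setOf_eq, hb]
      norm_num
  · rintro x ⟨hx1, hx2⟩
    have hx0 : x ≠ 0 := by
      rintro rfl
      exact hx2 rfl
    have hnx : 0 < ‖x‖ := norm_pos_iff.2 hx0
    refine ⟨‖x‖, ⟨hnx, by rwa [Metric.mem_ball, dist_zero_right] at hx1⟩,
      ‖x‖⁻¹ • x, norm_smul_inv_norm hx0, ?_, smul_inv_smul₀ hnx.ne' x⟩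
    have hcb : (‖x‖⁻¹ • x) b = ‖x‖⁻¹ * x b := rfl
    refine mul_ne_zero (Real.exp_pos _).ne' ?_
    rw [hcb]
    exact pow_ne_zero 2 (mul_ne_zero (inv_ne_zero hnx.ne') hx2)

lemma expansion (t s : ℝ) :
    ∫ x, Real.exp (x a) * (t * x a + s * x b)^2 ∂(uniformSphere n)
      = t^2 * (∫ x, Real.exp (x a) * (x a)^2 ∂(uniformSphere n))
        + (2*t*s) * (∫ x, Real.exp (x a) * (x a * x b) ∂(uniformSphere n))
        + s^2 * ∫ x, Real.exp (x a) * (x b)^2 ∂(uniformSphere n) := by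
  have hint1 : Integrable (fun x : EuclideanSpace ℝ (Fin n) =>
      Real.exp (x a) * (x a)^2) (uniformSphere n) :=
    integrable_uniformSphere hn ((Real.continuous_exp.comp (cont_coord a)).mul
      ((cont_coord a).pow 2))
  have hint2 : Integrable (fun x : EuclideanSpace ℝ (Fin n) =>
      Real.exp (x a) * (x b)^2) (uniformSphere n) :=
    integrable_uniformSphere hn ((Real.continuous_exp.comp (cont_coord a)).mul
      ((cont_coord b).pow 2))
  have hint3 : Integrable (fun x : EuclideanSpace ℝ (Fin n) =>
      Real.exp (x a) * (x a * x b)) (uniformSphere n) :=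
    integrable_uniformSphere hn ((Real.continuous_exp.comp (cont_coord a)).mul
      ((cont_coord a).mul (cont_coord b)))
  have hpt : ∀ x : EuclideanSpace ℝ (Fin n),
      Real.exp (x a) * (t * x a + s * x b)^2
        = t^2 * (Real.exp (x a) * (x a)^2) + ((2*t*s) * (Real.exp (x a) * (x a * x b))
            + s^2 * (Real.exp (x a) * (x b)^2)) := by
    intro x; ring
  have hBC : Integrable (fun x : EuclideanSpace ℝ (Fin n) =>
      (2*t*s) * (Real.exp (x a) * (x a * x b)) + s^2 * (Real.exp (x a) * (x b)^2))
      (uniformSphere n) := (hint3.const_mul _).add (hint2.const_mul _)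
  rw [MeasureTheory.integral_congr_ae (Filter.Eventually.of_forall hpt),
    integral_add (hint1.const_mul _) hBC,
    integral_add (hint3.const_mul _) (hint2.const_mul _),
    MeasureTheory.integral_const_mul, MeasureTheory.integral_const_mul,
    MeasureTheory.integral_const_mul]
  ring

end TwoCoords


lemma exists_good_basis (hn : 2 ≤ n) (y : EuclideanSpace ℝ (Fin n)) (hy : ‖y‖ = 1)
    (i : Fin n) :
    ∃ b : OrthonormalBasis (Fin n) ℝ (EuclideanSpace ℝ (Fin n)),
      b ⟨0, by omega⟩ = y ∧
      b.repr (EuclideanSpace.single i 1)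
        = (y i) • EuclideanSpace.single (⟨0, by omega⟩ : Fin n) 1
          + Real.sqrt (1 - (y i)^2) • EuclideanSpace.single (⟨1, by omega⟩ : Fin n) 1 := by
  classical
  set i0 : Fin n := ⟨0, by omega⟩ with hi0
  set i1 : Fin n := ⟨1, by omega⟩ with hi1
  have hne : i0 ≠ i1 := by simp [hi0, hi1, Fin.ext_iff]
  set t := y i with htdef
  have hinner : ⟪y, EuclideanSpace.single i (1:ℝ)⟫ = t := by
    rw [EuclideanSpace.inner_single_right]
    simp
    exact htdef.symm
  have hcard : Module.finrank ℝ (EuclideanSpace ℝ (Fin n)) = Fintype.card (Fin n) := by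
    simp [finrank_euclideanSpace]
  have ht1 : t^2 ≤ 1 := by
    have h := abs_real_inner_le_norm y (EuclideanSpace.single i (1:ℝ))
    rw [hinner, hy, EuclideanSpace.norm_single, norm_one, one_mul] at h
    rw [← sq_abs]
    nlinarith [abs_nonneg t]
  by_cases hcase : t^2 = 1
  · have hs0 : Real.sqrt (1 - t^2) = 0 := by rw [hcase]; simp
    have hsingle : EuclideanSpace.single i (1:ℝ) = t • y := by
      have hft : (t - 1) * (t + 1) = 0 := by nlinarith
      rcases mul_eq_zero.1 hft with h | h
      · have ht : t = 1 := by linarith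
        have h1 : ⟪y, EuclideanSpace.single i (1:ℝ)⟫
            = ‖y‖ * ‖EuclideanSpace.single i (1:ℝ)‖ := by
          rw [hinner, ht, hy, EuclideanSpace.norm_single, norm_one, one_mul]
        have h2 := inner_eq_norm_mul_iff_real.1 h1
        rw [hy, EuclideanSpace.norm_single, norm_one, one_smul, one_smul] at h2
        rw [ht, one_smul, h2]
      · have ht : t = -1 := by linarith
        have h1 : ⟪y, -EuclideanSpace.single i (1:ℝ)⟫
            = ‖y‖ * ‖-EuclideanSpace.single i (1:ℝ)‖ := by
          rw [inner_neg_right, hinner, ht, hy, norm_neg, EuclideanSpace.norm_single, norm_one,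
            one_mul]
          norm_num
        have h2 := inner_eq_norm_mul_iff_real.1 h1
        rw [hy, norm_neg, EuclideanSpace.norm_single, norm_one, one_smul, one_smul] at h2
        rw [ht, neg_one_smul, h2, neg_neg]
    set w : Fin n → EuclideanSpace ℝ (Fin n) := fun k => if k = i0 then y else 0 with hw
    have hON : Orthonormal ℝ (Set.restrict {i0} w) := by
      refine ⟨fun j => ?_, fun {j k} hjk => ?_⟩
      · have hj : (j : Fin n) = i0 := j.2
        simp only [Set.restrict_apply, hw, hj, if_pos rfl]
        simpa [Set.restrict, hj] using hy
      · exact absurd (Subtype.ext ((Set.mem_singleton_iff.1 j.2).trans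
          (Set.mem_singleton_iff.1 k.2).symm)) hjk
    obtain ⟨b, hb⟩ := Orthonormal.exists_orthonormalBasis_extension_of_card_eq hcard hON
    have hb0 : b i0 = y := by
      have := hb i0 rfl
      simpa [hw] using this
    refine ⟨b, hb0, ?_⟩
    rw [hsingle, _root_.map_smul, ← hb0, OrthonormalBasis.repr_self, hs0, zero_smul, add_zero]
  · have ht : t^2 < 1 := lt_of_le_of_ne ht1 hcase
    have hpos : 0 < 1 - t^2 := by linarith
    set sq := Real.sqrt (1 - t^2) with hsq
    have hsq_pos : 0 < sq := Real.sqrt_pos.2 hpos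
    have hsq2 : sq^2 = 1 - t^2 := Real.sq_sqrt hpos.le
    set u := EuclideanSpace.single i (1:ℝ) - t • y with hu
    set v := sq⁻¹ • u with hvdef
    have hsy : ⟪EuclideanSpace.single i (1:ℝ), y⟫ = t := by rw [real_inner_comm]; exact hinner
    have hnu : ‖u‖ = sq := by
      have h1 : ‖u‖^2 = sq^2 := by
        rw [hu, norm_sub_sq_real, real_inner_smul_right, hsy, EuclideanSpace.norm_single,
          norm_one, norm_smul, hy, hsq2]
        simp [sq_abs]
        ring
      calc ‖u‖ = Real.sqrt (‖u‖^2) := (Real.sqrt_sq (norm_nonneg _)).symm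
        _ = Real.sqrt (sq^2) := by rw [h1]
        _ = sq := Real.sqrt_sq hsq_pos.le
    have hv : ‖v‖ = 1 := by
      rw [hvdef, norm_smul, hnu, Real.norm_eq_abs, abs_of_pos (inv_pos.2 hsq_pos),
        inv_mul_cancel₀ hsq_pos.ne']
    have hyv : ⟪y, v⟫ = 0 := by
      rw [hvdef, real_inner_smul_right, hu, inner_sub_right, hinner, real_inner_smul_right,
        real_inner_self_eq_norm_sq, hy]
      ring
    set w : Fin n → EuclideanSpace ℝ (Fin n) := fun k => if k = i0 then y else v with hw
    have hmem0 : i0 ∈ ({i0, i1} : Set (Fin n)) := Set.mem_insert _ _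
    have hmem1 : i1 ∈ ({i0, i1} : Set (Fin n)) := Set.mem_insert_of_mem _ rfl
    have hON : Orthonormal ℝ (Set.restrict {i0, i1} w) := by
      refine ⟨fun j => ?_, fun {j k} hjk => ?_⟩
      · rcases j.2 with hj | hj
        · simp only [Set.restrict_apply, hw, hj, if_pos rfl]
          simpa [Set.restrict, hj] using hy
        · rw [Set.mem_singleton_iff] at hj
          simp only [Set.restrict_apply, hw, hj, if_neg (Ne.symm hne)]
          simpa [Set.restrict, hj, Ne.symm hne] using hv
      · have hjk' : (j : Fin n) ≠ (k : Fin n) := fun h => hjk (Subtype.ext h)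
        rcases j.2 with hj | hj <;> rcases k.2 with hk | hk
        · exact absurd (hj.trans hk.symm) hjk'
        · rw [Set.mem_singleton_iff] at hk
          simp only [Set.restrict_apply, hw, hj, hk, if_pos rfl, if_neg (Ne.symm hne)]
          simpa [Set.restrict, hj, hk, Ne.symm hne] using hyv
        · rw [Set.mem_singleton_iff] at hj
          simp only [Set.restrict_apply, hw, hj, hk, if_pos rfl, if_neg (Ne.symm hne)]
          rw [real_inner_comm]
          simpa [Set.restrict, hj, hk, Ne.symm hne] using hyv
        · rw [Set.mem_singleton_iff] at hj hk
          exact absurd (hj.trans hk.symm) hjk'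
    obtain ⟨b, hb⟩ := Orthonormal.exists_orthonormalBasis_extension_of_card_eq hcard hON
    have hb0 : b i0 = y := by
      have := hb i0 hmem0
      simpa [hw] using this
    have hb1 : b i1 = v := by
      have := hb i1 hmem1
      simpa [hw, Ne.symm hne] using this
    refine ⟨b, hb0, ?_⟩
    have hrepr : EuclideanSpace.single i (1:ℝ) = t • y + sq • v := by
      rw [hvdef, smul_smul, mul_inv_cancel₀ hsq_pos.ne', one_smul, hu]
      abel
    rw [hrepr, map_add, _root_.map_smul, _root_.map_smul, ← hb0, ← hb1, OrthonormalBasis.repr_self,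
      OrthonormalBasis.repr_self]

end SphereAux

theorem stmt19 {n : ℕ} (hn : 2 ≤ n) :
    ∃ C₂ C₃ : ℝ, 0 < C₂ ∧ 0 < C₃ ∧
      ∀ y : EuclideanSpace ℝ (Fin n), ‖y‖ = 1 → ∀ i : Fin n,
        (∫ x, Real.exp ⟪x, y⟫ * (x i) ^ 2 ∂(uniformSphere n)) =
          C₂ * (y i) ^ 2 + C₃ := by
  classical
  set i0 : Fin n := ⟨0, by omega⟩ with hi0
  set i1 : Fin n := ⟨1, by omega⟩ with hi1
  have hne : i0 ≠ i1 := by simp [hi0, hi1, Fin.ext_iff]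
  refine ⟨(∫ x, Real.exp (x i0) * (x i0)^2 ∂(uniformSphere n))
      - ∫ x, Real.exp (x i0) * (x i1)^2 ∂(uniformSphere n),
    ∫ x, Real.exp (x i0) * (x i1)^2 ∂(uniformSphere n),
    SphereAux.AB_pos hn hne, SphereAux.B_pos hn hne, ?_⟩
  intro y hy i
  obtain ⟨b, hb0, hbrepr⟩ := SphereAux.exists_good_basis hn y hy i
  set t := y i with htdef
  set s := Real.sqrt (1 - t^2) with hsdef
  have hinner : ⟪y, EuclideanSpace.single i (1:ℝ)⟫ = t := by
    rw [EuclideanSpace.inner_single_right]; simp; exact htdef.symm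
  have ht1 : t^2 ≤ 1 := by
    have h := abs_real_inner_le_norm y (EuclideanSpace.single i (1:ℝ))
    rw [hinner, hy, EuclideanSpace.norm_single, norm_one, one_mul] at h
    rw [← sq_abs]
    nlinarith [abs_nonneg t]
  have hs2 : s^2 = 1 - t^2 := Real.sq_sqrt (by linarith)
  have hT := SphereAux.integral_comp_LI b.repr.symm
    (fun x => Real.exp ⟪x, y⟫ * (x i) ^ 2)
  have hcoord : ∀ (z : EuclideanSpace ℝ (Fin n)) (j : Fin n),
      z j = ⟪z, EuclideanSpace.single j (1:ℝ)⟫ := by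
    intro z j
    rw [EuclideanSpace.inner_single_right]; simp
  have hpt : ∀ x : EuclideanSpace ℝ (Fin n),
      Real.exp ⟪(b.repr.symm x : EuclideanSpace ℝ (Fin n)), y⟫ * ((b.repr.symm x) i) ^ 2
        = Real.exp (x i0) * (t * x i0 + s * x i1) ^ 2 := by
    intro x
    have h1 : ⟪(b.repr.symm x : EuclideanSpace ℝ (Fin n)), y⟫ = x i0 := by
      calc ⟪(b.repr.symm x : EuclideanSpace ℝ (Fin n)), y⟫
          = ⟪b.repr (b.repr.symm x), b.repr y⟫ := (b.repr.inner_map_map _ _).symm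
        _ = ⟪x, EuclideanSpace.single i0 (1:ℝ)⟫ := by
            rw [LinearIsometryEquiv.apply_symm_apply, ← hb0, OrthonormalBasis.repr_self]
        _ = x i0 := (hcoord x i0).symm
    have h2 : (b.repr.symm x) i = t * x i0 + s * x i1 := by
      calc (b.repr.symm x) i
          = ⟪(b.repr.symm x : EuclideanSpace ℝ (Fin n)), EuclideanSpace.single i (1:ℝ)⟫ :=
            hcoord _ i
        _ = ⟪b.repr (b.repr.symm x), b.repr (EuclideanSpace.single i (1:ℝ))⟫ :=
            (b.repr.inner_map_map _ _).symm
        _ = ⟪x, t • EuclideanSpace.single i0 (1:ℝ) + s • EuclideanSpace.single i1 (1:ℝ)⟫ := by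
            rw [LinearIsometryEquiv.apply_symm_apply, hbrepr]
        _ = t * x i0 + s * x i1 := by
            rw [inner_add_right, real_inner_smul_right, real_inner_smul_right,
              ← hcoord x i0, ← hcoord x i1]
    rw [h1, h2]
  rw [← hT, MeasureTheory.integral_congr_ae (Filter.Eventually.of_forall hpt),
    SphereAux.expansion hn hne t s, SphereAux.C_zero hn hne, hs2]
  ring
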